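/- Let $M$ be a bounded self-adjoint operator on a Hilbert space with $0 \notin \sigma(M)$, and let $A$ be a compact self-adjoint operator. Then for any $s > 0$ such that $[-s, s] \cap \sigma(M) = \emptyset$, the pair of spectral projections $(\mathbb{P}_{(-\infty,0)}(M+A), \mathbb{P}_{(-\infty,0)}(M))$ is Fredholm and its index satisfies $|\operatorname{ind}(M + A, M)| \le n_*(s; A)$, where $n_*(s; A)$ counts the singular values of $A$ exceeding $s$. -/

import Mathlib

open scoped ENNReal

variable {H : Type*} [NormedAddCommGroup H] [InnerProductSpace ℂ H] [CompleteSpace H]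

/-- `P` is the spectral projection `𝟙_{(-∞,0)}(M)` of the bounded self-adjoint
operator `M`: an orthogonal projection commuting with `M`, with `M` negative
definite on its range and nonnegative on its kernel (= orthogonal
complement of the range). -/
def IsNegSpectralProj (M P : H →L[ℂ] H) : Prop :=
  IsIdempotentElem P ∧ IsSelfAdjoint P ∧ M ∘L P = P ∘L M ∧
    (∀ x ∈ LinearMap.range (P : H →ₗ[ℂ] H), x ≠ 0 → M.reApplyInnerSelf x < 0) ∧
    (∀ x ∈ LinearMap.ker (P : H →ₗ[ℂ] H), 0 ≤ M.reApplyInnerSelf x)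

/-- Index of the pair of projections `(P, Q)`:
`dim ker (P - Q - 1) - dim ker (P - Q + 1)`. -/
noncomputable def pairIndex (P Q : H →L[ℂ] H) : ℤ :=
  (Module.finrank ℂ (LinearMap.ker ((P - Q - 1 : H →L[ℂ] H) : H →ₗ[ℂ] H)) : ℤ) -
    (Module.finrank ℂ (LinearMap.ker ((P - Q + 1 : H →L[ℂ] H) : H →ₗ[ℂ] H)) : ℤ)

/-- `nStar s T` counts the singular values of `T` exceeding `s`
(variational characterization). -/
noncomputable def nStar (s : ℝ) (T : H →L[ℂ] H) : ℕ∞ :=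
  ⨆ V : {V : Submodule ℂ H // ∀ x ∈ V, x ≠ 0 → s * ‖x‖ < ‖T x‖},
    Cardinal.toENat (Module.rank ℂ V.1)

section Auxiliary

open RCLike ContinuousLinearMap
open scoped NNReal

local notation "⟪" x ", " y "⟫" => @inner ℂ H _ x y

/-- Cauchy–Schwarz-type bound for a selfadjoint operator with nonnegative
quadratic form: `‖T x‖ ^ 2 ≤ R * re ⟪T x, x⟫` whenever `‖T‖ ≤ R`. -/
private lemma aux_form_sq_bound {T : H →L[ℂ] H} (hT : IsSelfAdjoint T)
    (hpos : ∀ x, 0 ≤ re ⟪T x, x⟫) {R : ℝ} (hR : ‖T‖ ≤ R) (x : H) :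
    ‖T x‖ ^ 2 ≤ R * re ⟪T x, x⟫ := by
  have hR0 : 0 ≤ R := le_trans (norm_nonneg T) hR
  have hsym : ∀ u v : H, ⟪T u, v⟫ = ⟪u, T v⟫ := fun u v => hT.isSymmetric u v
  set y := T x with hy
  have hq : ∀ t : ℝ, 0 ≤ (re ⟪T y, y⟫) * (t * t) + (2 * ‖y‖ ^ 2) * t + re ⟪T x, x⟫ := by
    intro t
    have h0 := hpos (x + (t : ℂ) • y)
    have hTs : T (x + (t : ℂ) • y) = T x + (t : ℂ) • T y := by
      simp [map_add, map_smul]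
    rw [hTs] at h0
    have hexp : re ⟪T x + (t : ℂ) • T y, x + (t : ℂ) • y⟫
        = re ⟪T x, x⟫ + t * re ⟪T x, y⟫ + (t * re ⟪T y, x⟫ + t * (t * re ⟪T y, y⟫)) := by
      rw [inner_add_left, inner_add_right, inner_add_right, inner_smul_left, inner_smul_right,
        inner_smul_right, inner_smul_left, Complex.conj_ofReal]
      simp only [← Complex.real_smul, map_add, RCLike.smul_re]
      try ring
    rw [hexp] at h0
    have h1 : re ⟪T x, y⟫ = ‖y‖ ^ 2 := inner_self_eq_norm_sq (T x)
    have h2 : re ⟪T y, x⟫ = ‖y‖ ^ 2 := by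
      rw [hsym y x]
      exact inner_self_eq_norm_sq (T x)
    rw [h1, h2] at h0
    nlinarith [h0]
  have hd := discrim_le_zero hq
  rw [discrim] at hd
  have hTy : re ⟪T y, y⟫ ≤ R * ‖y‖ ^ 2 := by
    have hcs := re_inner_le_norm (𝕜 := ℂ) (T y) y
    have hop := T.le_opNorm y
    nlinarith [norm_nonneg y, norm_nonneg (T y)]
  rcases eq_or_lt_of_le (norm_nonneg y) with h0y | h0y
  · rw [← h0y]
    have := hpos x
    nlinarith
  · have hy2 : 0 < ‖y‖ ^ 2 := by positivity
    nlinarith [hpos x, mul_le_mul_of_nonneg_right hTy (hpos x)]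

/-- If a selfadjoint operator has nonnegative quadratic form and is bounded
below by `c`, then its quadratic form is bounded below by `c • ‖x‖ ^ 2`. -/
private lemma aux_form_ge {T : H →L[ℂ] H} (hT : IsSelfAdjoint T)
    (hpos : ∀ x, 0 ≤ re ⟪T x, x⟫) {c : ℝ} (hc : 0 < c)
    (hbelow : ∀ x, c * ‖x‖ ≤ ‖T x‖) (x : H) :
    c * ‖x‖ ^ 2 ≤ re ⟪T x, x⟫ := by
  set R : ℝ := ‖T‖ + c with hRdef
  have hR0 : 0 < R := lt_of_lt_of_le hc (le_add_of_nonneg_left (norm_nonneg T))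
  set good : ℝ → Prop := fun a => 0 ≤ a ∧ a ≤ c ∧ ∀ z, a * ‖z‖ ^ 2 ≤ re ⟪T z, z⟫ with hgood
  have hgood0 : good 0 := ⟨le_refl 0, hc.le, fun z => by simpa using hpos z⟩
  have hstep : ∀ a, good a → good (a + (c - a) ^ 2 / R) := by
    rintro a ⟨ha0, hac, haz⟩
    have hca : 0 ≤ c - a := by linarith
    set T' : H →L[ℂ] H := T - (a : ℂ) • 1 with hT'def
    have hsm : IsSelfAdjoint ((a : ℂ) • (1 : H →L[ℂ] H)) := by
      refine IsSelfAdjoint.smul ?_ (IsSelfAdjoint.one (H →L[ℂ] H))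
      show star ((a : ℂ)) = (a : ℂ)
      rw [RCLike.star_def, Complex.conj_ofReal]
    have hT' : IsSelfAdjoint T' := hT.sub hsm
    have hT'app : ∀ z, T' z = T z - (a : ℂ) • z := by
      intro z; simp [hT'def, sub_apply, smul_apply, one_apply]
    have hform' : ∀ z, re ⟪T' z, z⟫ = re ⟪T z, z⟫ - a * ‖z‖ ^ 2 := by
      intro z
      rw [hT'app, inner_sub_left, inner_smul_left, Complex.conj_ofReal,
        ← Complex.real_smul, map_sub, RCLike.smul_re, inner_self_eq_norm_sq]
    have hpos' : ∀ z, 0 ≤ re ⟪T' z, z⟫ := by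
      intro z; rw [hform']; linarith [haz z]
    have hnorm' : ‖T'‖ ≤ R := by
      have h1 : ‖T'‖ ≤ ‖T‖ + ‖(a : ℂ) • (1 : H →L[ℂ] H)‖ := norm_sub_le _ _
      have h2 : ‖(a : ℂ) • (1 : H →L[ℂ] H)‖ ≤ a := by
        rw [norm_smul]
        have hone : ‖(1 : H →L[ℂ] H)‖ ≤ 1 := by
          rw [ContinuousLinearMap.one_def]
          exact ContinuousLinearMap.norm_id_le
        have hnorma : ‖(a : ℂ)‖ = a := by
          rw [Complex.norm_real, Real.norm_eq_abs, abs_of_nonneg ha0]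
        calc ‖(a : ℂ)‖ * ‖(1 : H →L[ℂ] H)‖ ≤ ‖(a : ℂ)‖ * 1 :=
              mul_le_mul_of_nonneg_left hone (norm_nonneg _)
          _ = a := by rw [mul_one, hnorma]
      linarith
    have hbelow' : ∀ z, (c - a) * ‖z‖ ≤ ‖T' z‖ := by
      intro z
      have h1 : ‖T z‖ - ‖(a : ℂ) • z‖ ≤ ‖T z - (a : ℂ) • z‖ := norm_sub_norm_le _ _
      have h2 : ‖(a : ℂ) • z‖ = a * ‖z‖ := by
        rw [norm_smul, Complex.norm_real, Real.norm_eq_abs, abs_of_nonneg ha0]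
      rw [hT'app]
      have := hbelow z
      nlinarith [norm_nonneg z]
    have hkey : ∀ z, (c - a) ^ 2 * ‖z‖ ^ 2 ≤ R * (re ⟪T z, z⟫ - a * ‖z‖ ^ 2) := by
      intro z
      have hb := aux_form_sq_bound hT' hpos' hnorm' z
      rw [hform'] at hb
      have h3 : ((c - a) * ‖z‖) ^ 2 ≤ ‖T' z‖ ^ 2 := by
        have := hbelow' z
        nlinarith [norm_nonneg (T' z), mul_nonneg hca (norm_nonneg z)]
      nlinarith
    refine ⟨by positivity, ?_, ?_⟩
    · have h4 : (c - a) ^ 2 / R ≤ c - a := by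
        rw [div_le_iff₀ hR0]
        have h5 : c - a ≤ R := by
          have : c ≤ R := le_add_of_nonneg_left (norm_nonneg T)
          linarith
        nlinarith
      linarith
    · intro z
      have hkz := hkey z
      have h5 : (c - a) ^ 2 / R * ‖z‖ ^ 2 ≤ re ⟪T z, z⟫ - a * ‖z‖ ^ 2 := by
        rw [div_mul_eq_mul_div, div_le_iff₀ hR0]
        nlinarith
      have h6 := haz z
      nlinarith
  have hex : ∀ ε : ℝ, 0 < ε → ∃ a, good a ∧ c - ε ≤ a := by
    intro ε hε
    by_contra hcon
    push_neg at hcon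
    have hδ : 0 < ε ^ 2 / R := by positivity
    have hn : ∀ n : ℕ, ∃ a, good a ∧ (n : ℝ) * (ε ^ 2 / R) ≤ a := by
      intro n
      induction n with
      | zero => exact ⟨0, hgood0, by simp⟩
      | succ n ih =>
        obtain ⟨a, hga, hna⟩ := ih
        refine ⟨a + (c - a) ^ 2 / R, hstep a hga, ?_⟩
        have hlt := hcon a hga
        have hεca : ε ≤ c - a := by linarith
        have h7 : ε ^ 2 ≤ (c - a) ^ 2 := by nlinarith
        have h8 : ε ^ 2 / R ≤ (c - a) ^ 2 / R := by gcongr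
        push_cast
        linarith
    obtain ⟨n, hn'⟩ := exists_nat_gt (c / (ε ^ 2 / R))
    obtain ⟨a, hga, hna⟩ := hn n
    have h9 : c < (n : ℝ) * (ε ^ 2 / R) := by
      rw [div_lt_iff₀ hδ] at hn'
      linarith
    linarith [hga.2.1]
  rcases eq_or_lt_of_le (norm_nonneg x) with h0x | h0x
  · rw [← h0x]
    simpa using hpos x
  · have hx2 : 0 < ‖x‖ ^ 2 := by positivity
    by_contra hcontra
    push_neg at hcontra
    set ε : ℝ := (c * ‖x‖ ^ 2 - re ⟪T x, x⟫) / (2 * ‖x‖ ^ 2) with hεdef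
    have hε : 0 < ε := div_pos (by linarith) (by positivity)
    obtain ⟨a, hga, hca⟩ := hex ε hε
    have hax := hga.2.2 x
    have h10 : (c - ε) * ‖x‖ ^ 2 ≤ re ⟪T x, x⟫ := by
      have := mul_le_mul_of_nonneg_right hca (le_of_lt hx2)
      linarith
    have h11 : ε * ‖x‖ ^ 2 = (c * ‖x‖ ^ 2 - re ⟪T x, x⟫) / 2 := by
      rw [hεdef]
      field_simp
    nlinarith

/-- A selfadjoint operator whose spectrum avoids `[-s, s]` is bounded below
with a constant strictly bigger than `s`. -/
private lemma aux_below_of_gap {M : H →L[ℂ] H} (hM : IsSelfAdjoint M) {s : ℝ} (hs : 0 < s)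
    (hgap : ∀ t ∈ Set.Icc (-s) s, (t : ℂ) ∉ spectrum ℂ M) :
    ∃ c : ℝ, s < c ∧ ∀ x, c * ‖x‖ ≤ ‖M x‖ := by
  have h0 : (0 : ℂ) ∉ spectrum ℂ M := by
    have := hgap 0 ⟨by linarith, by linarith⟩
    simpa using this
  have hU : IsUnit M := (spectrum.zero_notMem_iff ℂ).mp h0
  obtain ⟨c, hsc, hcb⟩ : ∃ c : ℝ, s < c ∧ ∀ z ∈ spectrum ℂ M, c ≤ ‖z‖ := by
    rcases Set.eq_empty_or_nonempty (spectrum ℂ M) with he | hne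
    · exact ⟨s + 1, by linarith, by simp [he]⟩
    · have hcpt : IsCompact (spectrum ℂ M) := spectrum.isCompact M
      obtain ⟨z₀, hz₀, hmin⟩ := hcpt.exists_isMinOn hne continuous_norm.continuousOn
      refine ⟨‖z₀‖, ?_, fun z hz => hmin hz⟩
      by_contra hle
      push_neg at hle
      have hre : z₀ = (z₀.re : ℂ) := hM.mem_spectrum_eq_re hz₀
      have habs : |z₀.re| ≤ ‖z₀‖ := Complex.abs_re_le_norm z₀
      have hmem : z₀.re ∈ Set.Icc (-s) s := by
        rw [Set.mem_Icc]
        have h1 := abs_le.mp (le_trans habs hle)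
        exact ⟨h1.1, h1.2⟩
      exact hgap z₀.re hmem (hre ▸ hz₀)
  have hc0 : 0 < c := lt_trans hs hsc
  set u := hU.unit with hu
  have huM : (u : H →L[ℂ] H) = M := hU.unit_spec
  set B : H →L[ℂ] H := ((u⁻¹ : (H →L[ℂ] H)ˣ) : H →L[ℂ] H) with hB
  have hBM : B * M = 1 := by rw [← huM]; exact u.inv_mul
  have hMB : M * B = 1 := by rw [← huM]; exact u.mul_inv
  have hBsa : IsSelfAdjoint B := by
    have h1 : star B * M = 1 := by
      have h2 : star B * star M = star (M * B) := (star_mul M B).symm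
      rw [hM.star_eq] at h2
      rw [h2, hMB, star_one]
    calc star B = star B * (M * B) := by rw [hMB, mul_one]
      _ = (star B * M) * B := by rw [mul_assoc]
      _ = B := by rw [h1, one_mul]
  have hrad : spectralRadius ℂ B = ‖B‖₊ := hBsa.spectralRadius_eq_nnnorm
  set cn : ℝ≥0 := c.toNNReal with hcn
  have hcnc : (cn : ℝ) = c := Real.coe_toNNReal c hc0.le
  have hBnorm : ‖B‖₊ ≤ cn⁻¹ := by
    have hbound : spectralRadius ℂ B ≤ ((cn⁻¹ : ℝ≥0) : ℝ≥0∞) := by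
      rw [spectralRadius]
      refine iSup₂_le fun z hz => ?_
      have hz0 : z ≠ 0 := by
        intro h
        rw [h] at hz
        exact spectrum.zero_notMem ℂ (u⁻¹).isUnit hz
      set r : ℂˣ := Units.mk0 z hz0 with hr
      have hzmem : (r : ℂ) ∈ spectrum ℂ ((u⁻¹ : (H →L[ℂ] H)ˣ) : H →L[ℂ] H) := by
        simpa [hr] using hz
      have hzinv : ((r⁻¹ : ℂˣ) : ℂ) ∈ spectrum ℂ ((u⁻¹⁻¹ : (H →L[ℂ] H)ˣ) : H →L[ℂ] H) :=
        spectrum.inv_mem_iff.mp hzmem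
      rw [inv_inv, huM] at hzinv
      have hc1 : c ≤ ‖z⁻¹‖ := by simpa [hr] using hcb _ hzinv
      have hz1 : ‖z‖ ≤ c⁻¹ := by
        rw [norm_inv] at hc1
        have hzpos : 0 < ‖z‖ := norm_pos_iff.mpr hz0
        rwa [le_inv_comm₀ hc0 hzpos] at hc1
      have hz2 : ‖z‖₊ ≤ cn⁻¹ := by
        rw [← NNReal.coe_le_coe, coe_nnnorm, NNReal.coe_inv, hcnc]
        exact hz1
      exact_mod_cast hz2
    rw [hrad] at hbound
    exact_mod_cast hbound
  have hBn : ‖B‖ ≤ c⁻¹ := by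
    have := NNReal.coe_le_coe.mpr hBnorm
    rwa [coe_nnnorm, NNReal.coe_inv, hcnc] at this
  refine ⟨c, hsc, fun x => ?_⟩
  have hxB : B (M x) = x := by
    have := ContinuousLinearMap.ext_iff.mp hBM x
    simpa [ContinuousLinearMap.mul_apply] using this
  have h1 : ‖x‖ ≤ c⁻¹ * ‖M x‖ := by
    calc ‖x‖ = ‖B (M x)‖ := by rw [hxB]
      _ ≤ ‖B‖ * ‖M x‖ := B.le_opNorm (M x)
      _ ≤ c⁻¹ * ‖M x‖ := mul_le_mul_of_nonneg_right hBn (norm_nonneg _)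
  have h2 : c * (c⁻¹ * ‖M x‖) = ‖M x‖ := by
    field_simp
  calc c * ‖x‖ ≤ c * (c⁻¹ * ‖M x‖) := mul_le_mul_of_nonneg_left h1 hc0.le
    _ = ‖M x‖ := h2

/-- Kernel characterization: on `ker (P - Q - 1)` one has `P x = x` and
`Q x = 0`. -/
private lemma aux_ker_char {P Q : H →L[ℂ] H} (hP1 : IsIdempotentElem P) (hP2 : IsSelfAdjoint P)
    (hQ1 : IsIdempotentElem Q) (hQ2 : IsSelfAdjoint Q) {x : H}
    (hx : P x - Q x - x = 0) : P x = x ∧ Q x = 0 := by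
  have hPx : P x = x + Q x := by
    have : P x - Q x - x + (Q x + x) = 0 + (Q x + x) := by rw [hx]
    simpa [sub_add_cancel] using by linear_combination (norm := abel) this
  have hsymP : ∀ u v : H, ⟪P u, v⟫ = ⟪u, P v⟫ := fun u v => hP2.isSymmetric u v
  have hsymQ : ∀ u v : H, ⟪Q u, v⟫ = ⟪u, Q v⟫ := fun u v => hQ2.isSymmetric u v
  have hPP : P (P x) = P x := by
    have := congrArg (fun f : H →L[ℂ] H => f x) hP1
    simpa [ContinuousLinearMap.mul_apply] using this
  have hQQ : Q (Q x) = Q x := by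
    have := congrArg (fun f : H →L[ℂ] H => f x) hQ1
    simpa [ContinuousLinearMap.mul_apply] using this
  have hePP : ⟪P x, P x⟫ = ⟪x, P x⟫ := by rw [hsymP x (P x), hPP]
  have heQQ : ⟪Q x, Q x⟫ = ⟪x, Q x⟫ := by rw [hsymQ x (Q x), hQQ]
  have e1 : ‖P x‖ ^ 2 = re ⟪x, P x⟫ := by rw [← hePP]; exact (inner_self_eq_norm_sq (P x)).symm
  have e2 : ‖Q x‖ ^ 2 = re ⟪x, Q x⟫ := by rw [← heQQ]; exact (inner_self_eq_norm_sq (Q x)).symm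
  have e3 : re ⟪x, P x⟫ = ‖x‖ ^ 2 + ‖Q x‖ ^ 2 := by
    rw [hPx, inner_add_right, map_add, inner_self_eq_norm_sq x, e2]
  have e4 : ‖P x‖ ^ 2 = ‖x‖ ^ 2 + ‖Q x‖ ^ 2 := by rw [e1, e3]
  have e5 : ‖P x‖ ^ 2 ≤ ‖x‖ * ‖P x‖ := by
    rw [e1]
    exact re_inner_le_norm (𝕜 := ℂ) x (P x)
  have hQ0 : ‖Q x‖ = 0 := by
    rcases eq_or_lt_of_le (norm_nonneg (P x)) with hp0 | hp0
    · nlinarith [norm_nonneg x, norm_nonneg (Q x)]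
    · have hPle : ‖P x‖ ≤ ‖x‖ := by
        by_contra hlt
        push_neg at hlt
        have h6 : ‖x‖ * ‖P x‖ < ‖P x‖ * ‖P x‖ := mul_lt_mul_of_pos_right hlt hp0
        nlinarith
      nlinarith [norm_nonneg (Q x)]
  have hQx : Q x = 0 := norm_eq_zero.mp hQ0
  refine ⟨?_, hQx⟩
  rw [hPx, hQx, add_zero]

/-- The key quantitative estimate via the unitary `1 - 2 Q`: `M ≥ c` on
`ker Q` and `M ≤ -c` on `ran Q`, where `c > s` comes from the spectral gap. -/
private lemma aux_key_form {M Q : H →L[ℂ] H} (hM : IsSelfAdjoint M)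
    (hQ : IsNegSpectralProj M Q) {s : ℝ} (hs : 0 < s)
    (hgap : ∀ t ∈ Set.Icc (-s) s, (t : ℂ) ∉ spectrum ℂ M) :
    ∃ c : ℝ, s < c ∧ (∀ x, Q x = 0 → c * ‖x‖ ^ 2 ≤ re ⟪M x, x⟫) ∧
      (∀ x, Q x = x → re ⟪M x, x⟫ ≤ -(c * ‖x‖ ^ 2)) := by
  obtain ⟨hQ1, hQ2, hQcomm, hQneg, hQpos⟩ := hQ
  have hsymQ : ∀ u v : H, ⟪Q u, v⟫ = ⟪u, Q v⟫ := fun u v => hQ2.isSymmetric u v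
  obtain ⟨c, hsc, hbelow⟩ := aux_below_of_gap hM hs hgap
  have hc0 : 0 < c := lt_trans hs hsc
  have hQQ : ∀ y, Q (Q y) = Q y := by
    intro y
    have := congrArg (fun f : H →L[ℂ] H => f y) hQ1
    simpa [ContinuousLinearMap.mul_apply] using this
  have hMQ : ∀ y, M (Q y) = Q (M y) := by
    intro y
    have := congrArg (fun f : H →L[ℂ] H => f y) hQcomm
    simpa [ContinuousLinearMap.comp_apply] using this
  set U : H →L[ℂ] H := 1 - (2 : ℂ) • Q with hUdef
  have hUapp : ∀ y, U y = y - (2 : ℂ) • Q y := by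
    intro y; simp [hUdef, sub_apply, smul_apply, one_apply]
  set K : H →L[ℂ] H := M * U with hKdef
  have hKapp : ∀ y, K y = M (U y) := by
    intro y; simp [hKdef, ContinuousLinearMap.mul_apply]
  -- selfadjointness of K
  have hUsa : IsSelfAdjoint U := by
    have h2 : IsSelfAdjoint ((2 : ℂ) • Q) := by
      refine IsSelfAdjoint.smul ?_ hQ2
      show star ((2 : ℂ)) = (2 : ℂ)
      rw [show ((2:ℂ)) = ((2:ℝ):ℂ) by norm_num, RCLike.star_def, Complex.conj_ofReal]
    exact (IsSelfAdjoint.one (H →L[ℂ] H)).sub h2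
  have hMU : M * U = U * M := by
    have hq : M * Q = Q * M := hQcomm
    rw [hUdef]
    simp only [mul_sub, sub_mul, mul_one, one_mul, Algebra.mul_smul_comm,
      Algebra.smul_mul_assoc, hq]
  have hKsa : IsSelfAdjoint K := by
    rw [IsSelfAdjoint, hKdef, star_mul, hM.star_eq, hUsa.star_eq, ← hMU]
  -- the quadratic form of K is nonnegative
  have hKpos : ∀ y, 0 ≤ re ⟪K y, y⟫ := by
    intro y
    set a : H := y - Q y with ha
    set b : H := Q y with hb
    have hQa : Q a = 0 := by rw [ha, map_sub, hQQ, sub_self]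
    have hUy : U y = a - b := by
      rw [hUapp, ha, hb]
      have : ((2 : ℂ) • Q y) = Q y + Q y := two_smul ℂ (Q y)
      rw [this]
      abel
    have hyab : y = a + b := by rw [ha, hb]; abel
    have hKy : K y = M a - M b := by rw [hKapp, hUy, map_sub]
    have hMa_ker : Q (M a) = 0 := by rw [← hMQ, hQa, map_zero]
    have hMb_ran : M b = Q (M y) := by rw [hb, hMQ]
    have hcross1 : ⟪M a, b⟫ = 0 := by
      rw [hb, ← hsymQ (M a) y, hMa_ker, inner_zero_left]
    have hcross2 : ⟪M b, a⟫ = 0 := by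
      rw [hMb_ran, hsymQ (M y) a, hQa, inner_zero_right]
    have hexp : re ⟪K y, y⟫ = re ⟪M a, a⟫ - re ⟪M b, b⟫ := by
      rw [hKy]
      conv_lhs => rw [hyab]
      rw [inner_sub_left, inner_add_right, inner_add_right, hcross1, hcross2]
      simp [map_add, map_sub]
    rw [hexp]
    have hpa : 0 ≤ re ⟪M a, a⟫ := by
      have := hQpos a (by simpa [LinearMap.mem_ker] using hQa)
      simpa [ContinuousLinearMap.reApplyInnerSelf_apply] using this
    have hpb : 0 ≤ -re ⟪M b, b⟫ := by
      rcases eq_or_ne b 0 with hb0 | hb0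
      · simp [hb0]
      · have := hQneg b (LinearMap.mem_range.mpr ⟨y, rfl⟩) hb0
        have h' : re ⟪M b, b⟫ < 0 := by
          simpa [ContinuousLinearMap.reApplyInnerSelf_apply] using this
        linarith
    linarith
  -- U is an isometry
  have hQU : ∀ y, Q (U y) = -(Q y) := by
    intro y
    rw [hUapp, map_sub, map_smul, hQQ, two_smul ℂ (Q y)]
    abel
  have hUU : ∀ y, U (U y) = y := by
    intro y
    rw [hUapp (U y), hQU, hUapp, smul_neg, sub_neg_eq_add]
    abel
  have hUnorm : ∀ y, ‖U y‖ = ‖y‖ := by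
    intro y
    have h1 : re ⟪U y, U y⟫ = re ⟪y, y⟫ := by
      have hsymU : ∀ u v : H, ⟪U u, v⟫ = ⟪u, U v⟫ := fun u v => hUsa.isSymmetric u v
      rw [hsymU y (U y), hUU]
    have h2 : ‖U y‖ ^ 2 = ‖y‖ ^ 2 := by
      rw [← inner_self_eq_norm_sq (𝕜 := ℂ) (U y), ← inner_self_eq_norm_sq (𝕜 := ℂ) y, h1]
    nlinarith [norm_nonneg (U y), norm_nonneg y]
  have hKbelow : ∀ y, c * ‖y‖ ≤ ‖K y‖ := by
    intro y
    rw [hKapp]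
    calc c * ‖y‖ = c * ‖U y‖ := by rw [hUnorm]
      _ ≤ ‖M (U y)‖ := hbelow (U y)
  have hKform := aux_form_ge hKsa hKpos hc0 hKbelow
  refine ⟨c, hsc, ?_, ?_⟩
  · intro x hQx
    have hUx : U x = x := by rw [hUapp, hQx, smul_zero, sub_zero]
    have := hKform x
    rwa [hKapp, hUx] at this
  · intro x hQx
    have hUx : U x = -x := by
      rw [hUapp, hQx, two_smul ℂ x]
      abel
    have := hKform x
    rw [hKapp, hUx, map_neg, inner_neg_left, map_neg] at this
    linarith

/-- Riesz-type finiteness: a subspace on which a compact operator is bounded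
below is finite dimensional. -/
private lemma aux_findim {A : H →L[ℂ] H} (hAc : IsCompactOperator ⇑A)
    {s : ℝ} (hs : 0 < s) (V : Submodule ℂ H) (hVc : IsClosed (V : Set H))
    (hb : ∀ x ∈ V, s * ‖x‖ ≤ ‖A x‖) : FiniteDimensional ℂ V := by
  haveI : CompleteSpace V := hVc.completeSpace_coe
  set T : V →L[ℂ] H := A.comp V.subtypeL with hTdef
  have hTc : IsCompactOperator ⇑T := by
    have := hAc.comp_clm V.subtypeL
    simpa [hTdef, ContinuousLinearMap.coe_comp'] using this
  have hanti : AntilipschitzWith (s.toNNReal)⁻¹ ⇑T := by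
    apply ContinuousLinearMap.antilipschitz_of_bound
    intro x
    have hbx := hb (x : H) x.2
    show ‖(x : H)‖ ≤ ((s.toNNReal⁻¹ : ℝ≥0) : ℝ) * ‖A (x : H)‖
    rw [NNReal.coe_inv, Real.coe_toNNReal s hs.le, inv_mul_eq_div, le_div_iff₀ hs]
    linarith [hbx]
  have hUI : IsUniformInducing ⇑T := (hanti.isUniformInducing T.uniformContinuous)
  obtain ⟨K, hKcpt, hKmem⟩ := hTc
  obtain ⟨r, hr, hball⟩ := Metric.mem_nhds_iff.mp hKmem
  have himg : ⇑T '' Metric.closedBall (0 : V) (r / 2) ⊆ K := by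
    intro y hy
    obtain ⟨x, hx, rfl⟩ := hy
    apply hball
    have : ‖x‖ ≤ r / 2 := by simpa [Metric.mem_closedBall, dist_zero_right] using hx
    simp only [Metric.mem_ball, dist_zero_right]
    calc ‖x‖ ≤ r / 2 := this
      _ < r := by linarith
  have htb : TotallyBounded (Metric.closedBall (0 : V) (r / 2)) := by
    rw [← totallyBounded_image_iff hUI]
    exact hKcpt.totallyBounded.subset himg
  have hcompact : IsCompact (Metric.closedBall (0 : V) (r / 2)) := by
    rw [isCompact_iff_totallyBounded_isComplete]
    exact ⟨htb, Metric.isClosed_closedBall.isComplete⟩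
  exact FiniteDimensional.of_isCompact_closedBall₀ ℂ (by linarith : (0:ℝ) < r / 2) hcompact

end Auxiliary

/-- Estimate (4.10): if `M` is bounded self-adjoint with `0 ∉ σ(M)`, `A` is
compact self-adjoint and `[-s,s] ∩ σ(M) = ∅`, then the pair of negative
spectral projections of `M + A` and `M` is Fredholm and
`|ind(M + A, M)| ≤ n_*(s; A)`. -/
theorem index_le_nStar (M A P Q : H →L[ℂ] H)
    (hM : IsSelfAdjoint M) (hA : IsSelfAdjoint A) (hAc : IsCompactOperator ⇑A)
    (s : ℝ) (hs : 0 < s)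
    (hgap : ∀ t ∈ Set.Icc (-s) s, (t : ℂ) ∉ spectrum ℂ M)
    (hP : IsNegSpectralProj (M + A) P) (hQ : IsNegSpectralProj M Q) :
    FiniteDimensional ℂ (LinearMap.ker ((P - Q - 1 : H →L[ℂ] H) : H →ₗ[ℂ] H)) ∧
    FiniteDimensional ℂ (LinearMap.ker ((P - Q + 1 : H →L[ℂ] H) : H →ₗ[ℂ] H)) ∧
    ((pairIndex P Q).natAbs : ℕ∞) ≤ nStar s A := by
  obtain ⟨c, hsc, hker, hran⟩ := aux_key_form hM hQ hs hgap
  obtain ⟨hP1, hP2, hPcomm, hPneg, hPpos⟩ := hP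
  obtain ⟨hQ1, hQ2, hQcomm, hQneg, hQpos⟩ := hQ
  set V₁ : Submodule ℂ H := LinearMap.ker ((P - Q - 1 : H →L[ℂ] H) : H →ₗ[ℂ] H) with hV₁def
  set V₂ : Submodule ℂ H := LinearMap.ker ((P - Q + 1 : H →L[ℂ] H) : H →ₗ[ℂ] H) with hV₂def
  -- membership conditions
  have hmem₁ : ∀ x ∈ V₁, P x = x ∧ Q x = 0 := by
    intro x hx
    apply aux_ker_char hP1 hP2 hQ1 hQ2
    have : (P - Q - 1) x = 0 := hx
    simpa [ContinuousLinearMap.sub_apply, ContinuousLinearMap.one_apply] using this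
  have hmem₂ : ∀ x ∈ V₂, Q x = x ∧ P x = 0 := by
    intro x hx
    apply aux_ker_char hQ1 hQ2 hP1 hP2
    have h1 : (P - Q + 1) x = 0 := hx
    have h2 : P x - Q x + x = 0 := by
      simpa [ContinuousLinearMap.add_apply, ContinuousLinearMap.sub_apply,
        ContinuousLinearMap.one_apply] using h1
    have h3 : Q x - P x - x = -(P x - Q x + x) := by abel
    rw [h3, h2, neg_zero]
  -- strict singular-value bound on V₁
  have hV₁s : ∀ x ∈ V₁, x ≠ 0 → s * ‖x‖ < ‖A x‖ := by
    intro x hx hx0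
    obtain ⟨hPx, hQx⟩ := hmem₁ x hx
    have h1 : RCLike.re (@inner ℂ H _ ((M + A) x) x) < 0 := by
      have := hPneg x (LinearMap.mem_range.mpr ⟨x, hPx⟩) hx0
      simpa [ContinuousLinearMap.reApplyInnerSelf_apply, inner_add_left] using this
    have h2 : c * ‖x‖ ^ 2 ≤ RCLike.re (@inner ℂ H _ (M x) x) := hker x hQx
    have hadd : RCLike.re (@inner ℂ H _ ((M + A) x) x)
        = RCLike.re (@inner ℂ H _ (M x) x) + RCLike.re (@inner ℂ H _ (A x) x) := by
      rw [ContinuousLinearMap.add_apply, inner_add_left, map_add]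
    have hx1 : 0 < ‖x‖ := norm_pos_iff.mpr hx0
    have hx2 : 0 < ‖x‖ ^ 2 := by positivity
    have h3 : RCLike.re (@inner ℂ H _ (A x) x) < -(s * ‖x‖ ^ 2) := by nlinarith
    have h4 : -RCLike.re (@inner ℂ H _ (A x) x) ≤ ‖A x‖ * ‖x‖ := by
      calc -RCLike.re (@inner ℂ H _ (A x) x) ≤ |RCLike.re (@inner ℂ H _ (A x) x)| := neg_le_abs _
        _ ≤ ‖@inner ℂ H _ (A x) x‖ := RCLike.abs_re_le_norm _
        _ ≤ ‖A x‖ * ‖x‖ := norm_inner_le_norm (A x) x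
    nlinarith
  -- strict singular-value bound on V₂
  have hV₂s : ∀ x ∈ V₂, x ≠ 0 → s * ‖x‖ < ‖A x‖ := by
    intro x hx hx0
    obtain ⟨hQx, hPx⟩ := hmem₂ x hx
    have h1 : 0 ≤ RCLike.re (@inner ℂ H _ ((M + A) x) x) := by
      have := hPpos x (by simpa [LinearMap.mem_ker] using hPx)
      simpa [ContinuousLinearMap.reApplyInnerSelf_apply, inner_add_left] using this
    have h2 : RCLike.re (@inner ℂ H _ (M x) x) ≤ -(c * ‖x‖ ^ 2) := hran x hQx
    have hadd : RCLike.re (@inner ℂ H _ ((M + A) x) x)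
        = RCLike.re (@inner ℂ H _ (M x) x) + RCLike.re (@inner ℂ H _ (A x) x) := by
      rw [ContinuousLinearMap.add_apply, inner_add_left, map_add]
    have hx1 : 0 < ‖x‖ := norm_pos_iff.mpr hx0
    have hx2 : 0 < ‖x‖ ^ 2 := by positivity
    have h3 : s * ‖x‖ ^ 2 < RCLike.re (@inner ℂ H _ (A x) x) := by nlinarith
    have h4 : RCLike.re (@inner ℂ H _ (A x) x) ≤ ‖A x‖ * ‖x‖ := by
      calc RCLike.re (@inner ℂ H _ (A x) x) ≤ ‖@inner ℂ H _ (A x) x‖ := RCLike.re_le_norm _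
        _ ≤ ‖A x‖ * ‖x‖ := norm_inner_le_norm (A x) x
    nlinarith
  -- finite dimensionality
  have hfin₁ : FiniteDimensional ℂ V₁ := by
    apply aux_findim hAc hs V₁ (ContinuousLinearMap.isClosed_ker _)
    intro x hx
    rcases eq_or_ne x 0 with rfl | hx0
    · simp
    · exact (hV₁s x hx hx0).le
  have hfin₂ : FiniteDimensional ℂ V₂ := by
    apply aux_findim hAc hs V₂ (ContinuousLinearMap.isClosed_ker _)
    intro x hx
    rcases eq_or_ne x 0 with rfl | hx0
    · simp
    · exact (hV₂s x hx hx0).le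
  refine ⟨hfin₁, hfin₂, ?_⟩
  -- rank bounds
  have hle₁ : ((Module.finrank ℂ V₁ : ℕ) : ℕ∞) ≤ nStar s A := by
    have h := le_iSup (fun (W : {V : Submodule ℂ H // ∀ x ∈ V, x ≠ 0 → s * ‖x‖ < ‖A x‖}) =>
      Cardinal.toENat (Module.rank ℂ W.1)) ⟨V₁, hV₁s⟩
    rw [nStar]
    refine le_trans (le_of_eq ?_) h
    rw [← Module.finrank_eq_rank ℂ V₁, Cardinal.toENat_nat]
  have hle₂ : ((Module.finrank ℂ V₂ : ℕ) : ℕ∞) ≤ nStar s A := by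
    have h := le_iSup (fun (W : {V : Submodule ℂ H // ∀ x ∈ V, x ≠ 0 → s * ‖x‖ < ‖A x‖}) =>
      Cardinal.toENat (Module.rank ℂ W.1)) ⟨V₂, hV₂s⟩
    rw [nStar]
    refine le_trans (le_of_eq ?_) h
    rw [← Module.finrank_eq_rank ℂ V₂, Cardinal.toENat_nat]
  -- conclusion
  set d₁ := Module.finrank ℂ V₁ with hd₁
  set d₂ := Module.finrank ℂ V₂ with hd₂
  have hpi : pairIndex P Q = (d₁ : ℤ) - (d₂ : ℤ) := rfl
  have hmax : (pairIndex P Q).natAbs ≤ max d₁ d₂ := by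
    rw [hpi]
    omega
  calc ((pairIndex P Q).natAbs : ℕ∞) ≤ ((max d₁ d₂ : ℕ) : ℕ∞) := by exact_mod_cast hmax
    _ = max ((d₁ : ℕ) : ℕ∞) ((d₂ : ℕ) : ℕ∞) := by
        rcases le_total d₁ d₂ with h | h
        · rw [max_eq_right h, max_eq_right (by exact_mod_cast h)]
        · rw [max_eq_left h, max_eq_left (by exact_mod_cast h)]
    _ ≤ nStar s A := max_le hle₁ hle₂
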